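/- arXiv:2506.04681 — 2 statements merged into one kernel-verified Lean document; each statement's English description precedes it below -/
import Mathlib

section
/- For the truncated discrete Laplace distribution DLap_τ(ε) with τ = ⌈(1/ε) · log((e^{ε} + 2δ - 1) / ((e^{ε} + 1)δ))⌉ where 0 < δ < 1 and ε > 0, a count of 1 is released with probability at most δ: if Z ∼ DLap_τ(ε), then Pr[1 + Z > τ] = Pr[Z = τ] = β_{ε,τ} e^{-ετ} ≤ δ. -/
/-- With `τ = ⌈(1/ε) log((e^ε + 2δ - 1)/((e^ε + 1)δ))⌉`, the truncated discrete
Laplace distribution releases a count of `1` with probability at most `δ`: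
`Pr[1 + Z > τ] = Pr[Z = τ] = β_{ε,τ} e^{-ετ} ≤ δ`. -/
theorem truncated_dlap_count_one_release_prob (ε δ : ℝ) (hε : 0 < ε)
    (hδ0 : 0 < δ) (hδ1 : δ < 1)
    (τ : ℤ)
    (hτ : τ = ⌈(1 / ε) * Real.log ((Real.exp ε + 2 * δ - 1) / ((Real.exp ε + 1) * δ))⌉) :
    ((1 - Real.exp (-ε)) / (1 + Real.exp (-ε) - 2 * Real.exp (-ε * (τ + 1)))) *
      Real.exp (-ε * τ) ≤ δ := by
  have hE : 1 < Real.exp ε := by nlinarith [Real.add_one_le_exp ε]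
  set a := Real.exp (-ε) with ha
  have ha0 : 0 < a := Real.exp_pos _
  have ha1 : a < 1 := by rw [ha, Real.exp_lt_one_iff]; linarith
  set x := Real.exp (-ε * τ) with hx
  have hx0 : 0 < x := Real.exp_pos _
  have hN : 0 < Real.exp ε + 2 * δ - 1 := by linarith
  have hD : 0 < (Real.exp ε + 1) * δ := by positivity
  set R := (Real.exp ε + 2 * δ - 1) / ((Real.exp ε + 1) * δ) with hR
  have hR1 : 1 ≤ R := by
    rw [hR, le_div_iff₀ hD]; nlinarith
  have hlogR : 0 ≤ Real.log R := Real.log_nonneg hR1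
  have hτ' : (1 / ε) * Real.log R ≤ (τ : ℝ) := by
    rw [hτ]; exact_mod_cast Int.le_ceil _
  have hετ : Real.log R ≤ ε * τ := by
    have := mul_le_mul_of_nonneg_left hτ' (le_of_lt hε)
    field_simp at this
    linarith
  have hxle : x ≤ R⁻¹ := by
    rw [hx, ← Real.exp_log (show (0:ℝ) < R from lt_of_lt_of_le one_pos hR1), ← Real.exp_neg]
    exact Real.exp_le_exp.mpr (by linarith)
  have hkey : x * (Real.exp ε + 2 * δ - 1) ≤ (Real.exp ε + 1) * δ := by
    rw [hR, inv_div] at hxle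
    calc x * (Real.exp ε + 2 * δ - 1)
        ≤ ((Real.exp ε + 1) * δ / (Real.exp ε + 2 * δ - 1)) * (Real.exp ε + 2 * δ - 1) := by
          apply mul_le_mul_of_nonneg_right hxle (le_of_lt hN)
      _ = (Real.exp ε + 1) * δ := by field_simp; exact div_self (ne_of_gt (by linarith))
  have hx1 : x ≤ 1 := by
    rw [hx, Real.exp_le_one_iff]
    nlinarith
  have hae : a * Real.exp ε = 1 := by
    rw [ha, ← Real.exp_add]; simp
  have haxkey : Real.exp (-ε * (τ + 1)) = a * x := by
    rw [ha, hx, ← Real.exp_add]; ring_nf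
  rw [haxkey]
  have hDen : 0 < 1 + a - 2 * (a * x) := by nlinarith
  rw [div_mul_eq_mul_div, div_le_iff₀ hDen]
  nlinarith [mul_le_mul_of_nonneg_left hkey (le_of_lt ha0)]
end

section
/- The private partition selection mechanism PPS is (ε, δ)-DP when each record contributes at most one element (k = 1): the mechanism that, for each candidate element ω, computes its count c_ω (the number of records containing ω), adds independent truncated discrete Laplace noise Z_ω ∼ DLap_τ(ε) with τ = ⌈(1/ε) log((e^{ε} + 2δ - 1)/((e^{ε} + 1)δ))⌉, and releases ω iff c_ω + Z_ω > τ, satisfies (ε, δ)-differential privacy with respect to adding or removing one record. -/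
open scoped ENNReal

/-- Two multisets are adjacent if one is obtained from the other by adding or
removing one record. -/
def Adjacent {α : Type*} (x x' : Multiset α) : Prop :=
  (∃ a, x' = a ::ₘ x) ∨ (∃ a, x = a ::ₘ x')

/-- Probability that the (random) output of `μ` lies in `E`. -/
noncomputable def Pr {Y : Type*} (μ : PMF Y) (E : Set Y) : ℝ≥0∞ := μ.toOuterMeasure E

/-- `(ε, δ)`-differential privacy for a mechanism on multiset datasets. -/
def IsDP {α Y : Type*} (M : Multiset α → PMF Y) (ε δ : ℝ) : Prop :=
  ∀ x x' : Multiset α, Adjacent x x' → ∀ E : Set Y,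
    Pr (M x) E ≤ ENNReal.ofReal (Real.exp ε) * Pr (M x') E + ENNReal.ofReal δ


/-- The probability mass of the truncated discrete Laplace distribution
`DLap_τ(ε)`, supported on `[-τ, τ]`. -/
noncomputable def dlapTruncMass (ε : ℝ) (τ : ℤ) (z : ℤ) : ℝ :=
  if |z| ≤ τ then
    ((1 - Real.exp (-ε)) / (1 + Real.exp (-ε) - 2 * Real.exp (-ε * (τ + 1)))) *
      Real.exp (-ε * |(z : ℝ)|)
  else 0

/-- `Pr_{Z ∼ DLap_τ(ε)}[c + Z > τ]`: the probability that an element with count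
`c` is released by the thresholding rule. -/
noncomputable def releaseProb (ε : ℝ) (τ : ℤ) (c : ℕ) : ℝ :=
  ∑ z ∈ Finset.Ioc (τ - (c : ℤ)) τ, dlapTruncMass ε τ z

/-- The candidate elements of a dataset: the union of all its records. -/
def candidates {Ω : Type*} [DecidableEq Ω] (D : Multiset (Finset Ω)) : Finset Ω :=
  D.toFinset.sup id

/-- The count `c_ω` of an element: the number of records containing it. -/
def elemCount {Ω : Type*} [DecidableEq Ω] (D : Multiset (Finset Ω)) (ω : Ω) : ℕ :=
  (D.filter fun h => ω ∈ h).card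

noncomputable def dlapβ (ε : ℝ) (τ : ℤ) : ℝ :=
  (1 - Real.exp (-ε)) / (1 + Real.exp (-ε) - 2 * Real.exp (-ε * (τ + 1)))

lemma mass_eq (ε : ℝ) (τ z : ℤ) :
    dlapTruncMass ε τ z = if |z| ≤ τ then dlapβ ε τ * Real.exp (-ε * |(z : ℝ)|) else 0 := rfl

lemma exp_neg_lt_one {ε : ℝ} (hε : 0 < ε) : Real.exp (-ε) < 1 := by
  rw [Real.exp_lt_one_iff]; linarith

lemma den_pos {ε : ℝ} {τ : ℤ} (hε : 0 < ε) (hτ0 : 0 ≤ τ) :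
    0 < 1 + Real.exp (-ε) - 2 * Real.exp (-ε * (τ + 1)) := by
  have hτ0' : (0:ℝ) ≤ (τ : ℝ) := by exact_mod_cast hτ0
  have h1 : Real.exp (-ε * (τ + 1)) ≤ Real.exp (-ε) := by
    apply Real.exp_le_exp.mpr; nlinarith
  nlinarith [exp_neg_lt_one hε]

lemma β_pos {ε : ℝ} {τ : ℤ} (hε : 0 < ε) (hτ0 : 0 ≤ τ) : 0 < dlapβ ε τ := by
  have := den_pos hε hτ0
  have h1 := exp_neg_lt_one hε
  exact div_pos (by linarith) this

lemma mass_nonneg {ε : ℝ} {τ : ℤ} (hε : 0 < ε) (hτ0 : 0 ≤ τ) (z : ℤ) :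
    0 ≤ dlapTruncMass ε τ z := by
  rw [mass_eq]
  split
  · exact mul_nonneg (β_pos hε hτ0).le (Real.exp_nonneg _)
  · exact le_refl 0

lemma mass_shift_up {ε : ℝ} {τ : ℤ} (hε : 0 < ε) (hτ0 : 0 ≤ τ) {z : ℤ} (hz : z < τ) :
    dlapTruncMass ε τ z ≤ Real.exp ε * dlapTruncMass ε τ (z + 1) := by
  have hb := (β_pos hε hτ0).le
  rw [mass_eq, mass_eq]
  by_cases h1 : |z| ≤ τ
  · have h2 : |z + 1| ≤ τ := by
      rcases abs_le.mp h1 with ⟨ha, hb'⟩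
      apply abs_le.mpr; omega
    rw [if_pos h1, if_pos h2]
    have habs : |((z:ℝ) + 1)| ≤ |(z:ℝ)| + 1 := by
      calc |((z:ℝ) + 1)| ≤ |(z:ℝ)| + |(1:ℝ)| := abs_add_le _ _
        _ = |(z:ℝ)| + 1 := by rw [abs_one]
    have hexp : Real.exp (-ε * |(z:ℝ)|) ≤ Real.exp ε * Real.exp (-ε * |((z:ℝ)+1)|) := by
      rw [← Real.exp_add]
      apply Real.exp_le_exp.mpr
      nlinarith
    have hmul := mul_le_mul_of_nonneg_left hexp hb
    push_cast
    nlinarith [hmul]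
  · rw [if_neg h1]
    split
    · exact mul_nonneg (Real.exp_nonneg _) (mul_nonneg hb (Real.exp_nonneg _))
    · simp

lemma mass_shift_down {ε : ℝ} {τ : ℤ} (hε : 0 < ε) (hτ0 : 0 ≤ τ) {z : ℤ} (hz : -τ < z) :
    dlapTruncMass ε τ z ≤ Real.exp ε * dlapTruncMass ε τ (z - 1) := by
  have hb := (β_pos hε hτ0).le
  rw [mass_eq, mass_eq]
  by_cases h1 : |z| ≤ τ
  · have h2 : |z - 1| ≤ τ := by
      rcases abs_le.mp h1 with ⟨ha, hb'⟩
      apply abs_le.mpr; omega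
    rw [if_pos h1, if_pos h2]
    have habs : |((z:ℝ) - 1)| ≤ |(z:ℝ)| + 1 := by
      calc |((z:ℝ) - 1)| ≤ |(z:ℝ)| + |(1:ℝ)| := abs_sub _ _
        _ = |(z:ℝ)| + 1 := by rw [abs_one]
    have hexp : Real.exp (-ε * |(z:ℝ)|) ≤ Real.exp ε * Real.exp (-ε * |((z:ℝ)-1)|) := by
      rw [← Real.exp_add]
      apply Real.exp_le_exp.mpr
      nlinarith
    have hmul := mul_le_mul_of_nonneg_left hexp hb
    push_cast
    nlinarith [hmul]
  · rw [if_neg h1]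
    split
    · exact mul_nonneg (Real.exp_nonneg _) (mul_nonneg hb (Real.exp_nonneg _))
    · simp

lemma geom_sum_exp {ε : ℝ} (hε : 0 < ε) (n : ℕ) :
    ∑ z ∈ Finset.Icc (0:ℤ) (n:ℤ), Real.exp (-ε * (z:ℝ)) =
      (1 - Real.exp (-ε * ((n:ℝ) + 1))) / (1 - Real.exp (-ε)) := by
  have hne : 1 - Real.exp (-ε) ≠ 0 := by
    have := exp_neg_lt_one hε; linarith
  induction n with
  | zero =>
    simp [Real.exp_zero]
    exact (div_self hne).symm
  | succ n ih =>
    have hins : Finset.Icc (0:ℤ) ((n:ℤ)+1) = insert ((n:ℤ)+1) (Finset.Icc (0:ℤ) (n:ℤ)) := by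
      ext z; simp [Finset.mem_Icc, Finset.mem_insert]; omega
    push_cast
    rw [hins, Finset.sum_insert (by simp [Finset.mem_Icc])]
    push_cast at ih
    rw [ih]
    have key : Real.exp (-(ε * ((n:ℝ) + 1))) * Real.exp (-ε) = Real.exp (-(ε * ((n:ℝ) + 1 + 1))) := by
      rw [← Real.exp_add]; ring_nf
    field_simp
    push_cast
    nlinarith [key]

lemma sum_mass_eq_one {ε : ℝ} {τ : ℤ} (hε : 0 < ε) (hτ1 : 1 ≤ τ) :
    ∑ z ∈ Finset.Icc (-τ) τ, dlapTruncMass ε τ z = 1 := by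
  have hτ0 : (0:ℤ) ≤ τ := by omega
  have hne : 1 - Real.exp (-ε) ≠ 0 := by have := exp_neg_lt_one hε; linarith
  have hden := den_pos hε hτ0
  -- step 1 : all in range
  have h1 : ∑ z ∈ Finset.Icc (-τ) τ, dlapTruncMass ε τ z =
      dlapβ ε τ * ∑ z ∈ Finset.Icc (-τ) τ, Real.exp (-ε * |(z:ℝ)|) := by
    rw [Finset.mul_sum]
    apply Finset.sum_congr rfl
    intro z hz
    rw [mass_eq, if_pos (abs_le.mpr (Finset.mem_Icc.mp hz))]
  -- step 2 : split
  have hsplit : Finset.Icc (-τ) τ = Finset.Icc (-τ) (-1) ∪ Finset.Icc 0 τ := by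
    ext z; simp [Finset.mem_Icc, Finset.mem_union]; omega
  have hdisj : Disjoint (Finset.Icc (-τ) (-1)) (Finset.Icc (0:ℤ) τ) := by
    rw [Finset.disjoint_left]
    intro z h1 h2
    simp [Finset.mem_Icc] at h1 h2; omega
  -- step 3 : negative part
  have hneg : ∑ z ∈ Finset.Icc (-τ) (-1), Real.exp (-ε * |(z:ℝ)|) =
      ∑ z ∈ Finset.Icc (1:ℤ) τ, Real.exp (-ε * (z:ℝ)) := by
    apply Finset.sum_nbij' (fun z => -z) (fun z => -z)
    · intro z hz; simp [Finset.mem_Icc] at hz ⊢; omega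
    · intro z hz; simp [Finset.mem_Icc] at hz ⊢; omega
    · intro z _; ring
    · intro z _; ring
    · intro z hz
      simp [Finset.mem_Icc] at hz
      have : |((z:ℝ))| = -(z:ℝ) := by
        apply abs_of_nonpos
        exact_mod_cast (by omega : z ≤ (0:ℤ))
      rw [this]
      push_cast
      ring_nf
  -- step 4 : nonneg part
  have hpos : ∑ z ∈ Finset.Icc (0:ℤ) τ, Real.exp (-ε * |(z:ℝ)|) =
      ∑ z ∈ Finset.Icc (0:ℤ) τ, Real.exp (-ε * (z:ℝ)) := by
    apply Finset.sum_congr rfl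
    intro z hz
    simp [Finset.mem_Icc] at hz
    rw [abs_of_nonneg (by exact_mod_cast hz.1 : (0:ℝ) ≤ (z:ℝ))]
  -- step 5 : Icc 0 τ = insert 0 (Icc 1 τ)
  have hins : Finset.Icc (0:ℤ) τ = insert (0:ℤ) (Finset.Icc 1 τ) := by
    ext z; simp [Finset.mem_Icc]; omega
  -- step 6 : geometric value
  have hG : ∑ z ∈ Finset.Icc (0:ℤ) τ, Real.exp (-ε * (z:ℝ)) =
      (1 - Real.exp (-ε * ((τ:ℝ) + 1))) / (1 - Real.exp (-ε)) := by
    have := geom_sum_exp hε τ.toNat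
    rw [Int.toNat_of_nonneg hτ0] at this
    rw [this]
    congr 2
    have : ((τ.toNat : ℕ) : ℝ) = (τ : ℝ) := by
      exact_mod_cast congrArg (Int.cast : ℤ → ℝ) (Int.toNat_of_nonneg hτ0)
    rw [this]
  have hG1 : ∑ z ∈ Finset.Icc (1:ℤ) τ, Real.exp (-ε * (z:ℝ)) =
      (1 - Real.exp (-ε * ((τ:ℝ) + 1))) / (1 - Real.exp (-ε)) - 1 := by
    have : ∑ z ∈ Finset.Icc (0:ℤ) τ, Real.exp (-ε * (z:ℝ)) =
        1 + ∑ z ∈ Finset.Icc (1:ℤ) τ, Real.exp (-ε * (z:ℝ)) := by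
      rw [hins, Finset.sum_insert (by simp [Finset.mem_Icc])]
      simp
    linarith [hG, this]
  rw [h1, hsplit, Finset.sum_union hdisj, hneg, hpos, hG1, hG, dlapβ]
  set r := Real.exp (-ε) with hr
  set E := Real.exp (-ε * ((τ:ℝ) + 1)) with hE
  have hdenne : 1 + r - 2 * E ≠ 0 := ne_of_gt hden
  field_simp
  ring

lemma mass_neg (ε : ℝ) (τ z : ℤ) : dlapTruncMass ε τ (-z) = dlapTruncMass ε τ z := by
  rw [mass_eq, mass_eq, abs_neg]
  congr 1
  push_cast
  rw [abs_neg]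

lemma releaseProb_zero (ε : ℝ) (τ : ℤ) : releaseProb ε τ 0 = 0 := by
  simp [releaseProb]

lemma releaseProb_nonneg {ε : ℝ} {τ : ℤ} (hε : 0 < ε) (hτ0 : 0 ≤ τ) (c : ℕ) :
    0 ≤ releaseProb ε τ c :=
  Finset.sum_nonneg fun z _ => mass_nonneg hε hτ0 z

lemma releaseProb_succ (ε : ℝ) (τ : ℤ) (c : ℕ) :
    releaseProb ε τ (c+1) = dlapTruncMass ε τ (τ - c) + releaseProb ε τ c := by
  unfold releaseProb
  have h : Finset.Ioc (τ - ((c:ℤ)+1)) τ = insert (τ - c) (Finset.Ioc (τ - c) τ) := by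
    ext z; simp [Finset.mem_Ioc, Finset.mem_insert]; omega
  push_cast
  rw [h, Finset.sum_insert (by simp [Finset.mem_Ioc])]

lemma releaseProb_mono {ε : ℝ} {τ : ℤ} (hε : 0 < ε) (hτ0 : 0 ≤ τ) (c : ℕ) :
    releaseProb ε τ c ≤ releaseProb ε τ (c+1) := by
  rw [releaseProb_succ]
  linarith [mass_nonneg hε hτ0 (τ - c)]

lemma one_sub_releaseProb {ε : ℝ} {τ : ℤ} (hε : 0 < ε) (hτ1 : 1 ≤ τ) (c : ℕ) :
    1 - releaseProb ε τ c = ∑ z ∈ Finset.Icc (-τ) (τ - c), dlapTruncMass ε τ z := by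
  have hτ0 : (0:ℤ) ≤ τ := by omega
  have hp : releaseProb ε τ c =
      ∑ z ∈ (Finset.Icc (-τ) τ).filter (fun z => τ - (c:ℤ) < z), dlapTruncMass ε τ z := by
    unfold releaseProb
    symm
    apply Finset.sum_subset
    · intro z hz
      simp [Finset.mem_Icc, Finset.mem_filter, Finset.mem_Ioc] at hz ⊢
      omega
    · intro z hz hz2
      simp [Finset.mem_Ioc, Finset.mem_filter, Finset.mem_Icc] at hz hz2
      rw [mass_eq, if_neg (by rw [abs_le]; omega)]
  have hq : (Finset.Icc (-τ) τ).filter (fun z => ¬ (τ - (c:ℤ) < z)) = Finset.Icc (-τ) (τ - c) := by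
    ext z
    simp [Finset.mem_filter, Finset.mem_Icc]
    omega
  have := Finset.sum_filter_add_sum_filter_not (Finset.Icc (-τ) τ)
    (fun z => τ - (c:ℤ) < z) (dlapTruncMass ε τ)
  rw [hq] at this
  rw [hp]
  linarith [sum_mass_eq_one hε hτ1, this]

lemma releaseProb_le_one {ε : ℝ} {τ : ℤ} (hε : 0 < ε) (hτ1 : 1 ≤ τ) (c : ℕ) :
    releaseProb ε τ c ≤ 1 := by
  have hτ0 : (0:ℤ) ≤ τ := by omega
  have h := one_sub_releaseProb hε hτ1 c
  have : 0 ≤ ∑ z ∈ Finset.Icc (-τ) (τ - c), dlapTruncMass ε τ z :=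
    Finset.sum_nonneg fun z _ => mass_nonneg hε hτ0 z
  linarith

lemma step_up {ε δ : ℝ} {τ : ℤ} (hε : 0 < ε) (hτ1 : 1 ≤ τ)
    (hmτ : dlapTruncMass ε τ τ ≤ δ) (c : ℕ) :
    releaseProb ε τ (c+1) ≤ Real.exp ε * releaseProb ε τ c + δ := by
  have hτ0 : (0:ℤ) ≤ τ := by omega
  unfold releaseProb
  have hlt : τ - ((c:ℤ)+1) < τ := by omega
  have hsplit : Finset.Ioc (τ - ((c:ℤ)+1)) τ =
      insert τ (Finset.Ioo (τ - ((c:ℤ)+1)) τ) := (Finset.Ioo_insert_right hlt).symm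
  push_cast
  rw [hsplit, Finset.sum_insert (by simp)]
  have hstep : ∑ z ∈ Finset.Ioo (τ - ((c:ℤ)+1)) τ, dlapTruncMass ε τ z ≤
      ∑ z ∈ Finset.Ioo (τ - ((c:ℤ)+1)) τ, Real.exp ε * dlapTruncMass ε τ (z+1) := by
    apply Finset.sum_le_sum
    intro z hz
    simp [Finset.mem_Ioo] at hz
    exact mass_shift_up hε hτ0 hz.2
  have hre : ∑ z ∈ Finset.Ioo (τ - ((c:ℤ)+1)) τ, dlapTruncMass ε τ (z+1) =
      ∑ z ∈ Finset.Ioc (τ - (c:ℤ)) τ, dlapTruncMass ε τ z := by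
    apply Finset.sum_nbij' (fun z => z+1) (fun z => z-1)
    · intro z hz; simp [Finset.mem_Ioo, Finset.mem_Ioc] at hz ⊢; omega
    · intro z hz; simp [Finset.mem_Ioo, Finset.mem_Ioc] at hz ⊢; omega
    · intro z _; ring
    · intro z _; ring
    · intro z _; rfl
  rw [← Finset.mul_sum, hre] at hstep
  linarith [hstep, hmτ]

lemma step_down {ε δ : ℝ} {τ : ℤ} (hε : 0 < ε) (hτ1 : 1 ≤ τ) (hδ0 : 0 ≤ δ)
    (hmτ : dlapTruncMass ε τ τ ≤ δ) (c : ℕ) :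
    1 - releaseProb ε τ c ≤ Real.exp ε * (1 - releaseProb ε τ (c+1)) + δ := by
  have hτ0 : (0:ℤ) ≤ τ := by omega
  rw [one_sub_releaseProb hε hτ1, one_sub_releaseProb hε hτ1]
  have hc1 : τ - ((c:ℕ)+1:ℕ) = τ - (c:ℤ) - 1 := by push_cast; ring
  rw [hc1]
  have hnn : 0 ≤ ∑ z ∈ Finset.Icc (-τ) (τ - (c:ℤ) - 1), dlapTruncMass ε τ z :=
    Finset.sum_nonneg fun z _ => mass_nonneg hε hτ0 z
  by_cases hcb : -τ ≤ τ - (c:ℤ)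
  · have hsplit : Finset.Icc (-τ) (τ - (c:ℤ)) =
        insert (-τ) (Finset.Ioc (-τ) (τ - (c:ℤ))) := (Finset.Ioc_insert_left hcb).symm
    rw [hsplit, Finset.sum_insert (by simp)]
    have hstep : ∑ z ∈ Finset.Ioc (-τ) (τ - (c:ℤ)), dlapTruncMass ε τ z ≤
        ∑ z ∈ Finset.Ioc (-τ) (τ - (c:ℤ)), Real.exp ε * dlapTruncMass ε τ (z-1) := by
      apply Finset.sum_le_sum
      intro z hz
      simp [Finset.mem_Ioc] at hz
      exact mass_shift_down hε hτ0 hz.1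
    have hre : ∑ z ∈ Finset.Ioc (-τ) (τ - (c:ℤ)), dlapTruncMass ε τ (z-1) =
        ∑ z ∈ Finset.Icc (-τ) (τ - (c:ℤ) - 1), dlapTruncMass ε τ z := by
      apply Finset.sum_nbij' (fun z => z-1) (fun z => z+1)
      · intro z hz; simp [Finset.mem_Ioc, Finset.mem_Icc] at hz ⊢; omega
      · intro z hz; simp [Finset.mem_Ioc, Finset.mem_Icc] at hz ⊢; omega
      · intro z _; ring
      · intro z _; ring
      · intro z _; rfl
    rw [← Finset.mul_sum] at hstep
    rw [hre] at hstep
    have hmneg : dlapTruncMass ε τ (-τ) ≤ δ := by rw [mass_neg]; exact hmτ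
    linarith [hstep, hmneg]
  · have : Finset.Icc (-τ) (τ - (c:ℤ)) = ∅ := Finset.Icc_eq_empty (by omega)
    rw [this, Finset.sum_empty]
    nlinarith [Real.exp_pos ε, hnn]

lemma tau_pos {ε δ : ℝ} (hε : 0 < ε) (hδ0 : 0 < δ) (hδ1 : δ < 1) :
    (1:ℤ) ≤ ⌈(1 / ε) * Real.log ((Real.exp ε + 2 * δ - 1) / ((Real.exp ε + 1) * δ))⌉ := by
  have hX : 1 < Real.exp ε := by
    calc (1:ℝ) = Real.exp 0 := Real.exp_zero.symm
      _ < Real.exp ε := Real.exp_lt_exp.mpr hε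
  have hA : 1 < (Real.exp ε + 2 * δ - 1) / ((Real.exp ε + 1) * δ) := by
    rw [one_lt_div (by positivity)]
    nlinarith
  have hlog : 0 < Real.log ((Real.exp ε + 2 * δ - 1) / ((Real.exp ε + 1) * δ)) :=
    Real.log_pos hA
  have hpos : 0 < (1 / ε) * Real.log ((Real.exp ε + 2 * δ - 1) / ((Real.exp ε + 1) * δ)) := by
    positivity
  have := Int.lt_ceil.mpr (by exact_mod_cast hpos :
    ((0:ℤ):ℝ) < (1 / ε) * Real.log ((Real.exp ε + 2 * δ - 1) / ((Real.exp ε + 1) * δ)))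
  omega

lemma mass_tau_le {ε δ : ℝ} {τ : ℤ} (hε : 0 < ε) (hδ0 : 0 < δ) (hδ1 : δ < 1)
    (hτ : τ = ⌈(1 / ε) * Real.log ((Real.exp ε + 2 * δ - 1) / ((Real.exp ε + 1) * δ))⌉) :
    dlapTruncMass ε τ τ ≤ δ := by
  have hτ1 : (1:ℤ) ≤ τ := hτ ▸ tau_pos hε hδ0 hδ1
  have hτ0 : (0:ℤ) ≤ τ := by omega
  have hX : 1 < Real.exp ε := by
    calc (1:ℝ) = Real.exp 0 := Real.exp_zero.symm
      _ < Real.exp ε := Real.exp_lt_exp.mpr hε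
  have habs : |τ| = τ := abs_of_nonneg hτ0
  rw [mass_eq, if_pos (le_of_eq habs)]
  -- exp (-ε τ) ≤ (e^ε+1)δ/(e^ε+2δ-1)
  have hAd : (0:ℝ) < Real.exp ε + 2 * δ - 1 := by nlinarith
  have hBd : (0:ℝ) < (Real.exp ε + 1) * δ := by positivity
  have hle : (1 / ε) * Real.log ((Real.exp ε + 2 * δ - 1) / ((Real.exp ε + 1) * δ)) ≤ (τ:ℝ) := by
    rw [hτ]; exact Int.le_ceil _
  have hlog : Real.log ((Real.exp ε + 2 * δ - 1) / ((Real.exp ε + 1) * δ)) ≤ ε * τ := by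
    have h := mul_le_mul_of_nonneg_left hle hε.le
    rw [← mul_assoc, mul_one_div, div_self (ne_of_gt hε), one_mul] at h
    exact h
  have hAle : (Real.exp ε + 2 * δ - 1) / ((Real.exp ε + 1) * δ) ≤ Real.exp (ε * τ) := by
    calc (Real.exp ε + 2 * δ - 1) / ((Real.exp ε + 1) * δ)
        = Real.exp (Real.log ((Real.exp ε + 2 * δ - 1) / ((Real.exp ε + 1) * δ))) :=
          (Real.exp_log (by positivity)).symm
      _ ≤ Real.exp (ε * τ) := Real.exp_le_exp.mpr hlog
  set r := Real.exp (-ε) with hr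
  set X := Real.exp ε with hXd
  set u := Real.exp (-ε * (τ:ℝ)) with hu
  have hXr : X * r = 1 := by rw [hr, hXd, ← Real.exp_add]; simp
  have hur : Real.exp (-ε * ((τ:ℝ) + 1)) = u * r := by
    rw [hu, hr, ← Real.exp_add]; ring_nf
  have huX : u * Real.exp (ε * τ) = 1 := by rw [hu, ← Real.exp_add]; simp
  have hr0 : 0 < r := Real.exp_pos _
  have hu0 : 0 < u := Real.exp_pos _
  have hrlt : r < 1 := exp_neg_lt_one hε
  -- u ≤ (X+1)δ/(X+2δ-1)
  have hukey : u * (X + 2*δ - 1) ≤ (X + 1) * δ := by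
    have h1 : u * ((X + 2*δ - 1)/((X+1)*δ)) ≤ u * Real.exp (ε * τ) :=
      mul_le_mul_of_nonneg_left hAle hu0.le
    rw [huX] at h1
    rw [← sub_nonneg]
    have h2 : u * ((X + 2*δ - 1)/((X+1)*δ)) * ((X+1)*δ) ≤ 1 * ((X+1)*δ) :=
      mul_le_mul_of_nonneg_right h1 hBd.le
    rw [mul_assoc, div_mul_cancel₀ _ (ne_of_gt hBd)] at h2
    linarith
  have habsR : |((τ:ℤ):ℝ)| = ((τ:ℤ):ℝ) := abs_of_nonneg (by exact_mod_cast hτ0)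
  rw [habsR]
  have hden2 : 0 < 1 + r - 2 * (u * r) := by
    have h := den_pos (τ := τ) hε hτ0
    rw [hur] at h
    exact h
  show (1 - r) / (1 + r - 2 * Real.exp (-ε * ((τ:ℝ) + 1))) * u ≤ δ
  rw [hur]
  rw [div_mul_eq_mul_div, div_le_iff₀ hden2]
  have h5 := mul_le_mul_of_nonneg_right hukey hr0.le
  have h3 : u * (X * r) = u := by rw [hXr, mul_one]
  have h6 : δ * (X * r) = δ := by rw [hXr, mul_one]
  nlinarith [h5, h3, h6]

lemma candidates_cons {Ω : Type*} [DecidableEq Ω] (a : Finset Ω) (y : Multiset (Finset Ω)) :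
    candidates (a ::ₘ y) = a ∪ candidates y := by
  unfold candidates
  rw [Multiset.toFinset_cons, Finset.sup_insert]
  rfl

lemma elemCount_cons {Ω : Type*} [DecidableEq Ω] (a : Finset Ω) (y : Multiset (Finset Ω)) (ω : Ω) :
    elemCount (a ::ₘ y) ω = (if ω ∈ a then 1 else 0) + elemCount y ω := by
  unfold elemCount
  rw [Multiset.filter_cons]
  split_ifs with h <;> simp <;> omega

lemma elemCount_zero {Ω : Type*} [DecidableEq Ω] {D : Multiset (Finset Ω)} {ω : Ω}
    (hω : ω ∉ candidates D) : elemCount D ω = 0 := by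
  unfold elemCount
  rw [Multiset.card_eq_zero, Multiset.filter_eq_nil]
  intro h hD hmem
  apply hω
  have h1 : h ∈ D.toFinset := Multiset.mem_toFinset.mpr hD
  have h2 : h ⊆ candidates D := Finset.le_sup (f := id) h1
  exact h2 hmem

section ClassicalPart
attribute [local instance] Classical.propDecidable

lemma pr_powerset {Ω : Type*} [DecidableEq Ω] (M : Multiset (Finset Ω) → PMF (Set Ω))
    (hzero : ∀ (D : Multiset (Finset Ω)) (T : Set Ω),
      (¬ ∃ S : Finset Ω, ↑S = T ∧ S ⊆ candidates D) → M D T = 0)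
    (D : Multiset (Finset Ω)) (E : Set (Set Ω)) :
    Pr (M D) E = ∑ S ∈ (candidates D).powerset,
      (if (↑S : Set Ω) ∈ E then M D ↑S else 0) := by
  rw [Pr, PMF.toOuterMeasure_apply]
  rw [tsum_eq_sum (s := (candidates D).powerset.image (fun S : Finset Ω => (S : Set Ω)))
    (by
      intro T hT
      rw [Set.indicator_apply]
      split
      · apply hzero
        rintro ⟨S, rfl, hsub⟩
        exact hT (Finset.mem_image.mpr ⟨S, Finset.mem_powerset.mpr hsub, rfl⟩)
      · rfl)]
  rw [Finset.sum_image (fun S1 _ S2 _ h => Finset.coe_injective h)]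
  apply Finset.sum_congr rfl
  intro S hS
  rw [Set.indicator_apply]

lemma pr_repr {Ω : Type*} [DecidableEq Ω] (ε : ℝ) (τ : ℤ)
    (M : Multiset (Finset Ω) → PMF (Set Ω))
    (hmass : ∀ (D : Multiset (Finset Ω)) (S : Finset Ω), S ⊆ candidates D →
      M D ↑S =
        (∏ ω ∈ S, ENNReal.ofReal (releaseProb ε τ (elemCount D ω))) *
          ∏ ω ∈ candidates D \ S, ENNReal.ofReal (1 - releaseProb ε τ (elemCount D ω)))
    (hzero : ∀ (D : Multiset (Finset Ω)) (T : Set Ω),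
      (¬ ∃ S : Finset Ω, ↑S = T ∧ S ⊆ candidates D) → M D T = 0)
    (D : Multiset (Finset Ω)) (C : Finset Ω) (hsub : candidates D ⊆ C)
    (hout : ∀ ω ∈ C, ω ∉ candidates D → releaseProb ε τ (elemCount D ω) = 0)
    (E : Set (Set Ω)) :
    Pr (M D) E = ∑ S ∈ C.powerset, (if (↑S : Set Ω) ∈ E then
      (∏ ω ∈ S, ENNReal.ofReal (releaseProb ε τ (elemCount D ω))) *
        ∏ ω ∈ C \ S, ENNReal.ofReal (1 - releaseProb ε τ (elemCount D ω)) else 0) := by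
  rw [pr_powerset M hzero D E]
  rw [Finset.sum_subset (Finset.powerset_mono.mpr hsub)
    (by
      intro S hS hS2
      have hnot : ¬ S ⊆ candidates D := fun h => hS2 (Finset.mem_powerset.mpr h)
      rw [hzero D ↑S (by rintro ⟨S', hS', hsub'⟩; exact hnot (Finset.coe_injective hS' ▸ hsub'))]
      simp)]
  apply Finset.sum_congr rfl
  intro S hS
  by_cases hE : (↑S : Set Ω) ∈ E
  · rw [if_pos hE, if_pos hE]
    by_cases hSc : S ⊆ candidates D
    · rw [hmass D S hSc]
      congr 1
      apply Finset.prod_subset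
      · intro ω hω
        simp only [Finset.mem_sdiff] at hω ⊢
        exact ⟨hsub hω.1, hω.2⟩
      · intro ω hω hω2
        simp only [Finset.mem_sdiff] at hω hω2
        have hωc : ω ∉ candidates D := fun h => hω2 ⟨h, hω.2⟩
        rw [hout ω hω.1 hωc]
        simp
    · obtain ⟨ω, hωS, hωc⟩ := Finset.not_subset.mp hSc
      have h0 : releaseProb ε τ (elemCount D ω) = 0 :=
        hout ω (Finset.mem_powerset.mp hS hωS) hωc
      rw [hzero D ↑S (by rintro ⟨S', hS', hsub'⟩; exact hSc (Finset.coe_injective hS' ▸ hsub'))]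
      rw [Finset.prod_eq_zero hωS (by rw [h0]; simp)]
      simp
  · rw [if_neg hE, if_neg hE]

noncomputable def bigG {Ω : Type*} [DecidableEq Ω] (E : Set (Set Ω)) (R : Finset Ω) (ω₀ : Ω)
    (f : Ω → ℝ) (pv : ℝ) : ℝ≥0∞ :=
  ∑ S₀ ∈ R.powerset,
    (∏ ω ∈ S₀, ENNReal.ofReal (f ω)) * (∏ ω ∈ R \ S₀, ENNReal.ofReal (1 - f ω)) *
      ((if (↑S₀ : Set Ω) ∈ E then ENNReal.ofReal (1 - pv) else 0) +
        (if (↑(insert ω₀ S₀) : Set Ω) ∈ E then ENNReal.ofReal pv else 0))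

lemma bigG_congr {Ω : Type*} [DecidableEq Ω] (E : Set (Set Ω)) (R : Finset Ω) (ω₀ : Ω)
    {f f' : Ω → ℝ} (h : ∀ ω ∈ R, f ω = f' ω) (pv : ℝ) :
    bigG E R ω₀ f pv = bigG E R ω₀ f' pv := by
  unfold bigG
  apply Finset.sum_congr rfl
  intro S₀ hS₀
  have hS₀' := Finset.mem_powerset.mp hS₀
  congr 1
  congr 1
  · exact Finset.prod_congr rfl fun ω hω => by rw [h ω (hS₀' hω)]
  · exact Finset.prod_congr rfl fun ω hω => by rw [h ω (Finset.mem_sdiff.mp hω).1]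

lemma bigG_comp {Ω : Type*} [DecidableEq Ω] (E : Set (Set Ω)) (R : Finset Ω) (ω₀ : Ω)
    (f : Ω → ℝ) (hf0 : ∀ ω ∈ R, 0 ≤ f ω) (hf1 : ∀ ω ∈ R, f ω ≤ 1)
    {ε δ pv qv : ℝ} (hexp1 : 1 ≤ Real.exp ε) (hδ0 : 0 ≤ δ)
    (hp0 : 0 ≤ pv) (hp1 : pv ≤ 1) (hq0 : 0 ≤ qv) (hq1 : qv ≤ 1)
    (h1 : qv ≤ Real.exp ε * pv + δ) (h2 : 1 - qv ≤ Real.exp ε * (1 - pv) + δ) :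
    bigG E R ω₀ f qv ≤ ENNReal.ofReal (Real.exp ε) * bigG E R ω₀ f pv + ENNReal.ofReal δ := by
  have hWsum : ∑ S₀ ∈ R.powerset,
      (∏ ω ∈ S₀, ENNReal.ofReal (f ω)) * ∏ ω ∈ R \ S₀, ENNReal.ofReal (1 - f ω) = 1 := by
    rw [← Finset.prod_add]
    apply Finset.prod_eq_one
    intro ω hω
    rw [← ENNReal.ofReal_add (hf0 ω hω) (by linarith [hf1 ω hω])]
    simp
  have hX : ∀ S₀ : Finset Ω,
      ((if (↑S₀ : Set Ω) ∈ E then ENNReal.ofReal (1 - qv) else 0) +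
        (if (↑(insert ω₀ S₀) : Set Ω) ∈ E then ENNReal.ofReal qv else 0)) ≤
      ENNReal.ofReal (Real.exp ε) *
        ((if (↑S₀ : Set Ω) ∈ E then ENNReal.ofReal (1 - pv) else 0) +
          (if (↑(insert ω₀ S₀) : Set Ω) ∈ E then ENNReal.ofReal pv else 0)) +
        ENNReal.ofReal δ := by
    intro S₀
    by_cases hA : (↑S₀ : Set Ω) ∈ E <;> by_cases hB : (↑(insert ω₀ S₀) : Set Ω) ∈ E <;>
      simp only [hA, hB, if_pos, if_neg, if_true, if_false, add_zero, zero_add, mul_zero]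
    · rw [← ENNReal.ofReal_add (by linarith) hq0, ← ENNReal.ofReal_add (by linarith) hp0]
      have e1 : 1 - qv + qv = 1 := by ring
      have e2 : 1 - pv + pv = 1 := by ring
      rw [e1, e2, ENNReal.ofReal_one, mul_one]
      exact le_trans (ENNReal.one_le_ofReal.mpr hexp1) le_self_add
    · rw [← ENNReal.ofReal_mul (by linarith), ← ENNReal.ofReal_add (by nlinarith) hδ0]
      exact ENNReal.ofReal_le_ofReal h2
    · rw [← ENNReal.ofReal_mul (by linarith), ← ENNReal.ofReal_add (by nlinarith) hδ0]
      exact ENNReal.ofReal_le_ofReal h1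
    · exact zero_le
  unfold bigG
  calc ∑ S₀ ∈ R.powerset,
      (∏ ω ∈ S₀, ENNReal.ofReal (f ω)) * (∏ ω ∈ R \ S₀, ENNReal.ofReal (1 - f ω)) *
        ((if (↑S₀ : Set Ω) ∈ E then ENNReal.ofReal (1 - qv) else 0) +
          (if (↑(insert ω₀ S₀) : Set Ω) ∈ E then ENNReal.ofReal qv else 0))
      ≤ ∑ S₀ ∈ R.powerset,
      (∏ ω ∈ S₀, ENNReal.ofReal (f ω)) * (∏ ω ∈ R \ S₀, ENNReal.ofReal (1 - f ω)) *
        (ENNReal.ofReal (Real.exp ε) *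
          ((if (↑S₀ : Set Ω) ∈ E then ENNReal.ofReal (1 - pv) else 0) +
            (if (↑(insert ω₀ S₀) : Set Ω) ∈ E then ENNReal.ofReal pv else 0)) +
          ENNReal.ofReal δ) :=
        Finset.sum_le_sum fun S₀ _ => mul_le_mul_right (hX S₀) _
    _ = ENNReal.ofReal (Real.exp ε) * (∑ S₀ ∈ R.powerset,
          (∏ ω ∈ S₀, ENNReal.ofReal (f ω)) * (∏ ω ∈ R \ S₀, ENNReal.ofReal (1 - f ω)) *
            ((if (↑S₀ : Set Ω) ∈ E then ENNReal.ofReal (1 - pv) else 0) +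
              (if (↑(insert ω₀ S₀) : Set Ω) ∈ E then ENNReal.ofReal pv else 0))) +
        ENNReal.ofReal δ * ∑ S₀ ∈ R.powerset,
          (∏ ω ∈ S₀, ENNReal.ofReal (f ω)) * ∏ ω ∈ R \ S₀, ENNReal.ofReal (1 - f ω) := by
        rw [Finset.mul_sum, Finset.mul_sum, ← Finset.sum_add_distrib]
        apply Finset.sum_congr rfl
        intro S₀ _
        ring
    _ = ENNReal.ofReal (Real.exp ε) * (∑ S₀ ∈ R.powerset,
          (∏ ω ∈ S₀, ENNReal.ofReal (f ω)) * (∏ ω ∈ R \ S₀, ENNReal.ofReal (1 - f ω)) *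
            ((if (↑S₀ : Set Ω) ∈ E then ENNReal.ofReal (1 - pv) else 0) +
              (if (↑(insert ω₀ S₀) : Set Ω) ∈ E then ENNReal.ofReal pv else 0))) +
        ENNReal.ofReal δ := by rw [hWsum, mul_one]

lemma bigG_repr {Ω : Type*} [DecidableEq Ω] (ε : ℝ) (τ : ℤ)
    (M : Multiset (Finset Ω) → PMF (Set Ω))
    (hmass : ∀ (D : Multiset (Finset Ω)) (S : Finset Ω), S ⊆ candidates D →
      M D ↑S =
        (∏ ω ∈ S, ENNReal.ofReal (releaseProb ε τ (elemCount D ω))) *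
          ∏ ω ∈ candidates D \ S, ENNReal.ofReal (1 - releaseProb ε τ (elemCount D ω)))
    (hzero : ∀ (D : Multiset (Finset Ω)) (T : Set Ω),
      (¬ ∃ S : Finset Ω, ↑S = T ∧ S ⊆ candidates D) → M D T = 0)
    (D : Multiset (Finset Ω)) (R : Finset Ω) (ω₀ : Ω) (hω₀R : ω₀ ∉ R)
    (hsub : candidates D ⊆ insert ω₀ R)
    (hout : ∀ ω ∈ insert ω₀ R, ω ∉ candidates D → releaseProb ε τ (elemCount D ω) = 0)
    (E : Set (Set Ω)) :
    Pr (M D) E = bigG E R ω₀ (fun ω => releaseProb ε τ (elemCount D ω))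
      (releaseProb ε τ (elemCount D ω₀)) := by
  rw [pr_repr ε τ M hmass hzero D (insert ω₀ R) hsub hout E]
  rw [Finset.sum_powerset_insert hω₀R]
  unfold bigG
  rw [← Finset.sum_add_distrib]
  apply Finset.sum_congr rfl
  intro S₀ hS₀
  have hS₀R := Finset.mem_powerset.mp hS₀
  have hω₀S₀ : ω₀ ∉ S₀ := fun h => hω₀R (hS₀R h)
  have hω₀RS : ω₀ ∉ R \ S₀ := fun h => hω₀R (Finset.mem_sdiff.mp h).1
  have hd1 : insert ω₀ R \ S₀ = insert ω₀ (R \ S₀) := by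
    ext z
    simp only [Finset.mem_sdiff, Finset.mem_insert]
    constructor
    · rintro ⟨(rfl | hz), hns⟩
      · exact Or.inl rfl
      · exact Or.inr ⟨hz, hns⟩
    · rintro (rfl | ⟨hz, hns⟩)
      · exact ⟨Or.inl rfl, hω₀S₀⟩
      · exact ⟨Or.inr hz, hns⟩
  have hd2 : insert ω₀ R \ insert ω₀ S₀ = R \ S₀ := by
    ext z
    simp only [Finset.mem_sdiff, Finset.mem_insert, not_or]
    constructor
    · rintro ⟨(rfl | hz), hne, hns⟩
      · exact absurd rfl hne
      · exact ⟨hz, hns⟩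
    · rintro ⟨hz, hns⟩
      exact ⟨Or.inr hz, fun h => hω₀R (h ▸ hz), hns⟩
  rw [hd1, hd2, Finset.prod_insert hω₀RS, Finset.prod_insert hω₀S₀]
  split_ifs <;> ring

end ClassicalPart

/-- Private partition selection with per-record contribution `k = 1` is
`(ε, δ)`-DP: the mechanism that adds independent `DLap_τ(ε)` noise, with
`τ = ⌈(1/ε) log((e^ε + 2δ - 1)/((e^ε + 1)δ))⌉`, to the count of each candidate
element and releases exactly the elements whose noisy count exceeds `τ`,
satisfies `(ε, δ)`-DP on datasets whose records each contain at most one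
element. -/
theorem pps_is_dp {Ω : Type*} [DecidableEq Ω] (ε δ : ℝ) (hε : 0 < ε)
    (hδ0 : 0 < δ) (hδ1 : δ < 1)
    (τ : ℤ)
    (hτ : τ = ⌈(1 / ε) * Real.log ((Real.exp ε + 2 * δ - 1) / ((Real.exp ε + 1) * δ))⌉)
    (M : Multiset (Finset Ω) → PMF (Set Ω))
    (hmass : ∀ (D : Multiset (Finset Ω)) (S : Finset Ω), S ⊆ candidates D →
      M D ↑S =
        (∏ ω ∈ S, ENNReal.ofReal (releaseProb ε τ (elemCount D ω))) *
          ∏ ω ∈ candidates D \ S, ENNReal.ofReal (1 - releaseProb ε τ (elemCount D ω)))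
    (hzero : ∀ (D : Multiset (Finset Ω)) (T : Set Ω),
      (¬ ∃ S : Finset Ω, ↑S = T ∧ S ⊆ candidates D) → M D T = 0) :
    ∀ x x' : Multiset (Finset Ω),
      (∀ h ∈ x, h.card ≤ 1) → (∀ h ∈ x', h.card ≤ 1) → Adjacent x x' →
      ∀ E : Set (Set Ω),
        Pr (M x) E ≤ ENNReal.ofReal (Real.exp ε) * Pr (M x') E + ENNReal.ofReal δ := by
  classical
  have hτ1 : (1:ℤ) ≤ τ := hτ ▸ tau_pos hε hδ0 hδ1
  have hτ0 : (0:ℤ) ≤ τ := by omega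
  have hmτ : dlapTruncMass ε τ τ ≤ δ := mass_tau_le hε hδ0 hδ1 hτ
  have hexp1 : (1:ℝ) ≤ Real.exp ε := by
    calc (1:ℝ) = Real.exp 0 := Real.exp_zero.symm
      _ ≤ Real.exp ε := Real.exp_le_exp.mpr hε.le
  have key : ∀ (y : Multiset (Finset Ω)) (a : Finset Ω), a.card ≤ 1 → ∀ E : Set (Set Ω),
      Pr (M y) E ≤ ENNReal.ofReal (Real.exp ε) * Pr (M (a ::ₘ y)) E + ENNReal.ofReal δ ∧
      Pr (M (a ::ₘ y)) E ≤ ENNReal.ofReal (Real.exp ε) * Pr (M y) E + ENNReal.ofReal δ := by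
    intro y a ha E
    rcases Nat.le_one_iff_eq_zero_or_eq_one.mp ha with h0 | h1
    · have ha' : a = ∅ := Finset.card_eq_zero.mp h0
      subst ha'
      have hc : candidates ((∅ : Finset Ω) ::ₘ y) = candidates y := by
        rw [candidates_cons]; simp
      have hpt : ∀ T, M ((∅ : Finset Ω) ::ₘ y) T = M y T := by
        intro T
        by_cases hT : ∃ S : Finset Ω, ↑S = T ∧ S ⊆ candidates y
        · obtain ⟨S, rfl, hS⟩ := hT
          rw [hmass y S hS, hmass _ S (by rw [hc]; exact hS), hc]
          congr 1
          · exact Finset.prod_congr rfl fun ω _ => by rw [elemCount_cons]; simp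
          · exact Finset.prod_congr rfl fun ω _ => by rw [elemCount_cons]; simp
        · rw [hzero y T hT, hzero _ T (by rw [hc]; exact hT)]
      have hPr : Pr (M ((∅ : Finset Ω) ::ₘ y)) E = Pr (M y) E := by
        have hMeq : M ((∅ : Finset Ω) ::ₘ y) = M y := PMF.ext hpt
        rw [hMeq]
      have htriv : Pr (M y) E ≤ ENNReal.ofReal (Real.exp ε) * Pr (M y) E + ENNReal.ofReal δ := by
        refine le_trans ?_ le_self_add
        nth_rewrite 1 [← one_mul (Pr (M y) E)]
        exact mul_le_mul_left (ENNReal.one_le_ofReal.mpr hexp1) _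
      exact ⟨by rw [hPr]; exact htriv, by rw [hPr]; exact htriv⟩
    · obtain ⟨ω₀, rfl⟩ := Finset.card_eq_one.mp h1
      set R := (insert ω₀ (candidates y)).erase ω₀ with hR
      have hω₀R : ω₀ ∉ R := Finset.notMem_erase _ _
      have hCR : insert ω₀ (candidates y) = insert ω₀ R :=
        (Finset.insert_erase (Finset.mem_insert_self _ _)).symm
      have hcand : candidates ({ω₀} ::ₘ y) = insert ω₀ R := by
        rw [candidates_cons, ← hCR]
        ext z; simp
      have hsuby : candidates y ⊆ insert ω₀ R := by
        rw [← hCR]; exact Finset.subset_insert _ _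
      have hagree : ∀ ω ∈ R, elemCount ({ω₀} ::ₘ y) ω = elemCount y ω := by
        intro ω hω
        have hne : ω ≠ ω₀ := Finset.ne_of_mem_erase hω
        rw [elemCount_cons]
        simp [hne]
      have hcount₀ : elemCount ({ω₀} ::ₘ y) ω₀ = elemCount y ω₀ + 1 := by
        rw [elemCount_cons]; simp [Nat.add_comm]
      have hrep : Pr (M y) E = bigG E R ω₀ (fun ω => releaseProb ε τ (elemCount y ω))
          (releaseProb ε τ (elemCount y ω₀)) := by
        rw [bigG_repr ε τ M hmass hzero y R ω₀ hω₀R hsuby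
          (by intro ω hω hn; rw [elemCount_zero hn, releaseProb_zero]) E]
      have hrep' : Pr (M ({ω₀} ::ₘ y)) E =
          bigG E R ω₀ (fun ω => releaseProb ε τ (elemCount y ω))
            (releaseProb ε τ (elemCount y ω₀ + 1)) := by
        rw [bigG_repr ε τ M hmass hzero ({ω₀} ::ₘ y) R ω₀ hω₀R (le_of_eq hcand)
          (by intro ω hω hn; rw [hcand] at hn; exact absurd hω hn) E]
        rw [hcount₀]
        exact bigG_congr E R ω₀ (fun ω hω => by rw [hagree ω hω]) _
      set c := elemCount y ω₀ with hcdef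
      have hf0 : ∀ ω ∈ R, 0 ≤ releaseProb ε τ (elemCount y ω) :=
        fun ω _ => releaseProb_nonneg hε hτ0 _
      have hf1 : ∀ ω ∈ R, releaseProb ε τ (elemCount y ω) ≤ 1 :=
        fun ω _ => releaseProb_le_one hε hτ1 _
      have hp0 := releaseProb_nonneg hε hτ0 c
      have hp1 := releaseProb_le_one hε hτ1 c
      have hq0 := releaseProb_nonneg hε hτ0 (c+1)
      have hq1 := releaseProb_le_one hε hτ1 (c+1)
      have hmono := releaseProb_mono hε hτ0 c
      constructor
      · rw [hrep, hrep']
        apply bigG_comp E R ω₀ _ hf0 hf1 hexp1 hδ0.le hq0 hq1 hp0 hp1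
        · nlinarith [hmono, hq0, hexp1, hδ0]
        · exact step_down hε hτ1 hδ0.le hmτ c
      · rw [hrep, hrep']
        apply bigG_comp E R ω₀ _ hf0 hf1 hexp1 hδ0.le hp0 hp1 hq0 hq1
        · exact step_up hε hτ1 hmτ c
        · nlinarith [hmono, hp1, hexp1, hδ0]
  rintro x x' hx hx' (⟨a, rfl⟩ | ⟨a, rfl⟩) E
  · exact (key x a (hx' a (Multiset.mem_cons_self a x)) E).1
  · exact (key x' a (hx a (Multiset.mem_cons_self a x')) E).2
end
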